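/- Let $G$ be a group containing an element of infinite order and let $V$ be an infinite-dimensional vector space over a field $\mathbb{K}$. Then there exists a linear cellular automaton $\tau' \colon V^G \to V^G$ such that $\tau'(V^G)$ is not closed in $V^G$ for the prodiscrete topology. -/

import Mathlib

/-- `τ` is a cellular automaton over the group `G` and alphabet `A`:
there are a finite memory set `M ⊆ G` and a local defining map
`μ : A^M → A` with `τ(x)(g) = μ((g⁻¹ · x)|_M)`; note `(g⁻¹ · x)(m) = x (g * m)`. -/
def IsCellularAutomaton {G A : Type*} [Group G] (τ : (G → A) → (G → A)) : Prop :=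
  ∃ (M : Finset G) (μ : (M → A) → A),
    ∀ (x : G → A) (g : G), τ x g = μ (fun m => x (g * m.val))


/-- The prodiscrete topology on `G → A`: product of discrete topologies. -/
def prodiscrete (G A : Type*) : TopologicalSpace (G → A) :=
  @Pi.topologicalSpace G (fun _ => A) (fun _ => ⊥)

theorem exists_linear_ca_image_not_closed
    {G : Type*} [Group G] (g₀ : G) (hg₀ : ¬ IsOfFinOrder g₀)
    {K V : Type*} [Field K] [AddCommGroup V] [Module K V]
    (hV : ¬ FiniteDimensional K V) :
    ∃ τ' : (G → V) → (G → V), IsLinearMap K τ' ∧ IsCellularAutomaton τ' ∧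
      ¬ @IsClosed _ (prodiscrete G V) (Set.range τ') := by
  classical
  -- A basis of `V`, with infinite index type.
  set B := Module.Basis.ofVectorSpace K V with hB
  haveI : Infinite (Module.Basis.ofVectorSpaceIndex K V) := by
    rw [← not_finite_iff_infinite]
    intro h
    exact hV (Module.Finite.of_basis B)
  set φ := Infinite.natEmbedding (Module.Basis.ofVectorSpaceIndex K V) with hφ
  -- The "shift" on basis indices.
  set σ : Module.Basis.ofVectorSpaceIndex K V → Module.Basis.ofVectorSpaceIndex K V :=
    Function.extend φ (fun n => φ (n + 1)) id with hσ
  have hσφ : ∀ m : ℕ, σ (φ m) = φ (m + 1) := fun m =>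
    φ.injective.extend_apply _ _ m
  have hσid : ∀ i, (¬ ∃ m, φ m = i) → σ i = i := fun i h =>
    Function.extend_apply' _ _ _ h
  have hσinj : Function.Injective σ := by
    intro a b hab
    by_cases ha : ∃ m, φ m = a <;> by_cases hb' : ∃ m, φ m = b
    · obtain ⟨m, rfl⟩ := ha
      obtain ⟨k, rfl⟩ := hb'
      rw [hσφ, hσφ] at hab
      have := φ.injective hab
      exact congrArg φ (by omega)
    · obtain ⟨m, rfl⟩ := ha
      rw [hσφ, hσid b hb'] at hab
      exact absurd ⟨m + 1, hab⟩ hb'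
    · obtain ⟨k, rfl⟩ := hb'
      rw [hσφ, hσid a ha] at hab
      exact absurd ⟨k + 1, hab.symm⟩ ha
    · rwa [hσid a ha, hσid b hb'] at hab
  have h0 : φ 0 ∉ Set.range σ := by
    rintro ⟨a, ha⟩
    by_cases h : ∃ m, φ m = a
    · obtain ⟨m, rfl⟩ := h
      rw [hσφ] at ha
      exact Nat.succ_ne_zero m (φ.injective ha)
    · rw [hσid a h] at ha
      exact h ⟨0, ha.symm⟩
  -- The linear map `f : V → V` shifting the chosen countable part of the basis.
  set fL : V →ₗ[K] V :=
    (B.repr.symm.toLinearMap).comp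
      ((Finsupp.lmapDomain K K σ).comp B.repr.toLinearMap) with hfLdef
  have hfL : ∀ v : V, B.repr (fL v) = Finsupp.mapDomain σ (B.repr v) := by
    intro v
    simp only [hfLdef, LinearMap.comp_apply, LinearEquiv.coe_coe,
      Finsupp.lmapDomain_apply, LinearEquiv.apply_symm_apply]
  have hfB : ∀ j : ℕ, fL (B (φ j)) = B (φ (j + 1)) := by
    intro j
    simp only [hfLdef, LinearMap.comp_apply, LinearEquiv.coe_coe, Module.Basis.repr_self,
      Finsupp.lmapDomain_apply, Finsupp.mapDomain_single, hσφ,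
      Module.Basis.repr_symm_single_one]
  -- The "ℤ-coordinate" along cosets of ⟨g₀⟩.
  have hzinj : Function.Injective fun k : ℤ => g₀ ^ k :=
    injective_zpow_iff_not_isOfFinOrder.mpr hg₀
  have hmem : ∀ g : G, ∃ k : ℤ,
      ((QuotientGroup.mk g : G ⧸ Subgroup.zpowers g₀)).out⁻¹ * g = g₀ ^ k := by
    intro g
    have h : ((QuotientGroup.mk g : G ⧸ Subgroup.zpowers g₀)).out⁻¹ * g ∈
        Subgroup.zpowers g₀ := by
      rw [← QuotientGroup.eq]
      exact QuotientGroup.out_eq' _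
    obtain ⟨k, hk⟩ := Subgroup.mem_zpowers_iff.mp h
    exact ⟨k, hk.symm⟩
  set idx : G → ℤ := fun g => (hmem g).choose with hidx
  have hn : ∀ g : G, idx (g * g₀) = idx g + 1 := by
    intro g
    have e1 : (QuotientGroup.mk (g * g₀) : G ⧸ Subgroup.zpowers g₀) =
        QuotientGroup.mk g := by
      rw [QuotientGroup.eq]
      have : (g * g₀)⁻¹ * g = g₀⁻¹ := by group
      rw [this]
      exact Subgroup.inv_mem _ (Subgroup.mem_zpowers g₀)
    have e2 : (Quotient.out (QuotientGroup.mk (g * g₀) : G ⧸ Subgroup.zpowers g₀)) =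
        Quotient.out (QuotientGroup.mk g : G ⧸ Subgroup.zpowers g₀) := by rw [e1]
    have h1 := (hmem (g * g₀)).choose_spec
    have h2 := (hmem g).choose_spec
    have key0 : g₀ ^ idx (g * g₀) = g₀ ^ (idx g + 1) := by
      rw [zpow_add_one, ← h1, ← h2, e2, mul_assoc]
    exact hzinj key0
  -- The cellular automaton.
  set τ' : (G → V) → (G → V) := fun x g => fL (x g) - x (g * g₀) with hτ'
  refine ⟨τ', ?_, ?_, ?_⟩
  · constructor
    · intro x y
      funext g
      simp only [hτ', map_add, Pi.add_apply]
      abel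
    · intro c x
      funext g
      simp only [hτ', map_smul, Pi.smul_apply, smul_sub]
  · refine ⟨{1, g₀}, fun u =>
      fL (u ⟨1, by simp⟩) - u ⟨g₀, by simp⟩, ?_⟩
    intro x g
    simp [hτ']
  · -- the image is not closed
    intro hcl
    set y : G → V := fun _ => B (φ 0) with hy
    -- the building blocks for approximate preimages
    set w : ℤ → V := fun m => -(∑ j ∈ Finset.range m.toNat, B (φ j)) with hw
    have key : ∀ k : ℤ, 0 ≤ k → fL (w k) - w (k + 1) = B (φ 0) := by
      intro k hk
      have ht : (k + 1).toNat = k.toNat + 1 := by omega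
      simp only [hw, map_neg, map_sum, hfB, ht]
      rw [Finset.sum_range_succ']
      abel
    -- `y` is in the closure of the range of `τ'`
    letI : TopologicalSpace (G → V) := prodiscrete G V
    have hyc : y ∈ closure (Set.range τ') := by
      rw [mem_closure_iff]
      intro o ho hyo
      obtain ⟨I, u, hu, hsub⟩ :=
        (@isOpen_pi_iff G (fun _ => V) (fun _ => ⊥) o).mp ho y hyo
      set S : ℕ := I.sup fun g => (-(idx g)).toNat with hS
      set N : ℤ := -(S : ℤ) with hNdef
      have hN : ∀ g ∈ I, 0 ≤ idx g - N := by
        intro g hg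
        have h1 : (-(idx g)).toNat ≤ S := Finset.le_sup (f := fun g => (-(idx g)).toNat) hg
        have h2 : -(idx g) ≤ ((-(idx g)).toNat : ℤ) := Int.self_le_toNat _
        omega
      set x : G → V := fun g => w (idx g - N) with hx
      have hτx : ∀ g ∈ I, τ' x g = y g := by
        intro g hg
        have : idx (g * g₀) - N = (idx g - N) + 1 := by rw [hn]; ring
        simp only [hτ', hx, hy, this]
        exact key _ (hN g hg)
      refine ⟨τ' x, hsub ?_, ⟨x, rfl⟩⟩
      intro g hg
      rw [hτx g hg]
      exact (hu g hg).2
    -- `y` is not in the range of `τ'`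
    have hyn : y ∉ Set.range τ' := by
      rintro ⟨x, hx⟩
      set c : G → (Module.Basis.ofVectorSpaceIndex K V →₀ K) := fun g => B.repr (x g) with hc
      have heq : ∀ g, Finsupp.mapDomain σ (c g) - c (g * g₀) =
          Finsupp.single (φ 0) (1 : K) := by
        intro g
        have h1 : fL (x g) - x (g * g₀) = B (φ 0) := congrFun hx g
        have h2 := congrArg B.repr h1
        rw [map_sub, hfL, Module.Basis.repr_self] at h2
        exact h2
      have h0' : ∀ g, c g (φ 0) = -1 := by
        intro g
        have h1 := congrArg (fun z => z (φ 0)) (heq (g * g₀⁻¹))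
        simp only [Finsupp.sub_apply, Finsupp.single_eq_same,
          Finsupp.mapDomain_notin_range _ _ h0, inv_mul_cancel_right] at h1
        linear_combination -h1
      have hstep : ∀ g (m : ℕ), c (g * g₀) (φ (m + 1)) = c g (φ m) := by
        intro g m
        have hne : φ 0 ≠ φ (m + 1) := fun h => Nat.succ_ne_zero m (φ.injective h).symm
        have h1 := congrArg (fun z => z (φ (m + 1))) (heq g)
        simp only [Finsupp.sub_apply, Finsupp.single_eq_of_ne' hne] at h1
        rw [← hσφ m, Finsupp.mapDomain_apply hσinj] at h1
        rw [← hσφ m]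
        linear_combination -h1
      have hall : ∀ (m : ℕ) (g : G), c g (φ m) = -1 := by
        intro m
        induction m with
        | zero => exact h0'
        | succ m ih =>
          intro g
          have : g = (g * g₀⁻¹) * g₀ := by group
          rw [this, hstep]
          exact ih _
      have hsupp : ∀ m : ℕ, φ m ∈ (c 1).support := by
        intro m
        rw [Finsupp.mem_support_iff, hall]
        exact neg_ne_zero.mpr one_ne_zero
      have hinf : (↑(c 1).support : Set (Module.Basis.ofVectorSpaceIndex K V)).Infinite :=
        Set.infinite_of_injective_forall_mem φ.injective hsupp
      exact hinf (Finset.finite_toSet _)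
    exact hyn (hcl.closure_subset hyc)
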